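/- Let v_1, ..., v_n > 0 and let M be a real number with 0 < M < n. Consider minimizing F(x) = ∑_{r=1}^n 1/(x_r v_r) over vectors x with 0 < x_r ≤ 1 for all r and ∑_r x_r = M. If γ > 0 satisfies ∑_r min{1, 1/√(v_r γ)} = M, then the vector x*_r = min{1, 1/√(γ v_r)} is a global minimizer of F over the feasible set. -/

import Mathlib

lemma key_wf (v γ b : ℝ) (hv : 0 < v) (hγ : 0 < γ) (hb : 0 < b) (hb1 : b ≤ 1) :
    1 / (min 1 (1 / Real.sqrt (v * γ)) * v) + γ * min 1 (1 / Real.sqrt (v * γ)) ≤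
      1 / (b * v) + γ * b := by
  set s := Real.sqrt (v * γ) with hs
  have hs0 : 0 < s := Real.sqrt_pos.2 (mul_pos hv hγ)
  have hs2 : s ^ 2 = v * γ := Real.sq_sqrt (mul_pos hv hγ).le
  have hbv : 0 < b * v := mul_pos hb hv
  have hubv : 1 / (b * v) * (b * v) = 1 := by field_simp
  rcases le_or_gt s 1 with h | h
  · have hmin : min 1 (1 / s) = 1 := by
      rw [min_eq_left]
      exact one_le_one_div hs0 h
    rw [hmin, one_mul, mul_one]
    have hwbv : 1 / v * (b * v) = b := by field_simp
    have hA : γ * (b * v) ≤ 1 := by nlinarith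
    nlinarith [hbv, hubv, hwbv, mul_nonneg (sub_nonneg.2 hb1) (sub_nonneg.2 hA)]
  · have hmin : min 1 (1 / s) = 1 / s := by
      rw [min_eq_right]
      exact le_of_lt ((div_lt_one hs0).2 h)
    rw [hmin]
    have h1 : 1 / (1 / s * v) = s / v := by
      rw [one_div_mul_eq_div, div_div_eq_mul_div, one_mul]
    rw [h1]
    have hγs : γ * (1 / s) = s / v := by
      field_simp
      nlinarith
    rw [hγs]
    have hsb : s / v * (b * v) = s * b := by field_simp
    have e : γ * b * (b * v) = (s * b) ^ 2 := by
      rw [show γ * b * (b * v) = v * γ * (b * b) from by ring, ← hs2]; ring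
    nlinarith [hbv, hubv, hsb, e, sq_nonneg (s * b - 1)]

/-- Water-filling optimality: if `γ > 0` satisfies `∑ r, min{1, 1/√(v r γ)} = M`, then
`x* r = min{1, 1/√(γ v r)}` globally minimizes `∑ r, 1/(x r · v r)` over vectors with
`0 < x r ≤ 1` and `∑ r, x r = M`. -/
theorem stmt_5 (n : ℕ) (v : Fin n → ℝ) (hv : ∀ r, 0 < v r)
    (M : ℝ) (hM : 0 < M) (hMn : M < n)
    (γ : ℝ) (hγ : 0 < γ)
    (heq : (∑ r, min 1 (1 / Real.sqrt (v r * γ))) = M) :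
    ∀ x : Fin n → ℝ, (∀ r, 0 < x r) → (∀ r, x r ≤ 1) → (∑ r, x r) = M →
      (∑ r, 1 / (min 1 (1 / Real.sqrt (v r * γ)) * v r)) ≤ ∑ r, 1 / (x r * v r) := by
  intro x hx0 hx1 hxM
  have h1 : ∑ r, (1 / (min 1 (1 / Real.sqrt (v r * γ)) * v r) + γ * min 1 (1 / Real.sqrt (v r * γ)))
      ≤ ∑ r, (1 / (x r * v r) + γ * x r) :=
    Finset.sum_le_sum fun r _ => key_wf (v r) γ (x r) (hv r) hγ (hx0 r) (hx1 r)
  rw [Finset.sum_add_distrib, Finset.sum_add_distrib, ← Finset.mul_sum, ← Finset.mul_sum,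
    heq, hxM] at h1
  linarith
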